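/- arXiv:2605.30535 — 2 statements merged into one kernel-verified Lean document; each statement's English description precedes it below -/
import Mathlib

section
/- Let G = ⟨a, b, c, s, t | sas⁻¹ = ab, sbs⁻¹ = b, scs⁻¹ = c, tat⁻¹ = ba, tbt⁻¹ = b, tct⁻¹ = c⟩. Then the centraliser of b in G is the subgroup generated by {b, s, t}, and the centraliser of c in G is the subgroup generated by {c, s, t}. -/
/-- Generators of
`G = ⟨a,b,c,s,t | sas⁻¹=ab, sbs⁻¹=b, scs⁻¹=c, tat⁻¹=ba, tbt⁻¹=b, tct⁻¹=c⟩`. -/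
inductive Gen
  | a | b | c | s | t

open FreeGroup in
/-- Relators of
`G = ⟨a,b,c,s,t | sas⁻¹=ab, sbs⁻¹=b, scs⁻¹=c, tat⁻¹=ba, tbt⁻¹=b, tct⁻¹=c⟩`. -/
def ffRels : Set (FreeGroup Gen) :=
  { of Gen.s * of Gen.a * (of Gen.s)⁻¹ * (of Gen.a * of Gen.b)⁻¹,
    of Gen.s * of Gen.b * (of Gen.s)⁻¹ * (of Gen.b)⁻¹,
    of Gen.s * of Gen.c * (of Gen.s)⁻¹ * (of Gen.c)⁻¹,
    of Gen.t * of Gen.a * (of Gen.t)⁻¹ * (of Gen.b * of Gen.a)⁻¹,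
    of Gen.t * of Gen.b * (of Gen.t)⁻¹ * (of Gen.b)⁻¹,
    of Gen.t * of Gen.c * (of Gen.t)⁻¹ * (of Gen.c)⁻¹ }



namespace FFModel

inductive ABC | a | b | c
  deriving DecidableEq

open FreeGroup

abbrev F3 := FreeGroup ABC
abbrev F2 := FreeGroup Bool

def act (i : Bool) : ABC → F3
  | ABC.a => if i then of ABC.b * of ABC.a else of ABC.a * of ABC.b
  | ABC.b => of ABC.b
  | ABC.c => of ABC.c

def actInv (i : Bool) : ABC → F3
  | ABC.a => if i then (of ABC.b)⁻¹ * of ABC.a else of ABC.a * (of ABC.b)⁻¹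
  | ABC.b => of ABC.b
  | ABC.c => of ABC.c

def σ (i : Bool) : F3 ≃* F3 :=
  MonoidHom.toMulEquiv (FreeGroup.lift (act i)) (FreeGroup.lift (actInv i))
    (by ext x; cases x <;> cases i <;> simp [act, actInv])
    (by ext x; cases x <;> cases i <;> simp [act, actInv])

def α : F2 →* MulAut F3 := FreeGroup.lift (fun i => σ i)

@[simp] lemma α_of (i : Bool) : α (of i) = σ i := FreeGroup.lift_apply_of

@[simp] lemma α_pure (i : Bool) : α (pure i) = σ i := FreeGroup.lift_apply_of

@[simp] lemma σ_pure (i : Bool) (x : ABC) : σ i (pure x) = act i x := FreeGroup.lift_apply_of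

@[simp] lemma σ_apply (i : Bool) (x : ABC) : σ i (of x) = act i x := FreeGroup.lift_apply_of

lemma α_fix_b (u : F2) : α u (of ABC.b) = of ABC.b := by
  induction u using FreeGroup.induction_on with
  | C1 => simp
  | of i => simp [act]
  | inv_of i _ =>
    apply (α (of i)).injective
    rw [_root_.map_inv, MulAut.inv_def, MulEquiv.apply_symm_apply]
    simp [act]
  | mul u v hu hv => rw [_root_.map_mul, MulAut.mul_apply, hv, hu]

lemma α_fix_c (u : F2) : α u (of ABC.c) = of ABC.c := by
  induction u using FreeGroup.induction_on with
  | C1 => simp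
  | of i => simp [act]
  | inv_of i _ =>
    apply (α (of i)).injective
    rw [_root_.map_inv, MulAut.inv_def, MulEquiv.apply_symm_apply]
    simp [act]
  | mul u v hu hv => rw [_root_.map_mul, MulAut.mul_apply, hv, hu]

abbrev K := F3 ⋊[α] F2

open SemidirectProduct

def genMap : Gen → K
  | Gen.a => inl (of ABC.a)
  | Gen.b => inl (of ABC.b)
  | Gen.c => inl (of ABC.c)
  | Gen.s => inr (of false)
  | Gen.t => inr (of true)

lemma conj_in_K (u : F2) (n m : F3) (h : α u n = m) :
    inr u * inl n * (inr u)⁻¹ * (inl m)⁻¹ = (1 : K) := by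
  rw [← _root_.map_inv (inr : F2 →* K) u, ← inl_aut, h]
  simp

lemma rels_mapped : ∀ r ∈ ffRels, FreeGroup.lift genMap r = 1 := by
  intro r hr
  rcases hr with h | h | h | h | h | h <;> subst h
  all_goals
    simp only [_root_.map_mul, _root_.map_inv, FreeGroup.lift_apply_of, genMap]
    try rw [← _root_.map_mul (inl : F3 →* K)]
    exact conj_in_K _ _ _ (by simp [act])

def φ : PresentedGroup ffRels →* K := PresentedGroup.toGroup rels_mapped

@[simp] lemma φ_of (x : Gen) : φ (PresentedGroup.of x) = genMap x :=
  PresentedGroup.toGroup.of rels_mapped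

def abcMap : ABC → PresentedGroup ffRels
  | ABC.a => PresentedGroup.of Gen.a
  | ABC.b => PresentedGroup.of Gen.b
  | ABC.c => PresentedGroup.of Gen.c

def f₁ : F3 →* PresentedGroup ffRels := FreeGroup.lift abcMap

def f₂ : F2 →* PresentedGroup ffRels :=
  FreeGroup.lift (fun i => if i then PresentedGroup.of Gen.t else PresentedGroup.of Gen.s)

lemma rel_eq_one (r : FreeGroup Gen) (hr : r ∈ ffRels) :
    PresentedGroup.mk ffRels r = 1 := by
  exact (QuotientGroup.eq_one_iff r).mpr (Subgroup.subset_normalClosure hr)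

lemma conj_rel (x y : Gen) (z : FreeGroup Gen)
    (hr : FreeGroup.of x * FreeGroup.of y * (FreeGroup.of x)⁻¹ * z⁻¹ ∈ ffRels) :
    PresentedGroup.of (rels := ffRels) x * PresentedGroup.of y * (PresentedGroup.of x)⁻¹ =
      PresentedGroup.mk ffRels z := by
  have h1 := rel_eq_one _ hr
  simp only [_root_.map_mul, _root_.map_inv] at h1
  have h2 := mul_eq_one_iff_eq_inv.mp h1
  rw [inv_inv] at h2
  exact h2

lemma s_a : PresentedGroup.of (rels := ffRels) Gen.s * PresentedGroup.of Gen.a *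
    (PresentedGroup.of Gen.s)⁻¹ = PresentedGroup.of Gen.a * PresentedGroup.of Gen.b :=
  (conj_rel Gen.s Gen.a (FreeGroup.of Gen.a * FreeGroup.of Gen.b)
    (by simp [ffRels])).trans (by rw [_root_.map_mul]; rfl)

lemma s_b : PresentedGroup.of (rels := ffRels) Gen.s * PresentedGroup.of Gen.b *
    (PresentedGroup.of Gen.s)⁻¹ = PresentedGroup.of Gen.b :=
  (conj_rel Gen.s Gen.b (FreeGroup.of Gen.b) (by simp [ffRels])).trans rfl

lemma s_c : PresentedGroup.of (rels := ffRels) Gen.s * PresentedGroup.of Gen.c *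
    (PresentedGroup.of Gen.s)⁻¹ = PresentedGroup.of Gen.c :=
  (conj_rel Gen.s Gen.c (FreeGroup.of Gen.c) (by simp [ffRels])).trans rfl

lemma t_a : PresentedGroup.of (rels := ffRels) Gen.t * PresentedGroup.of Gen.a *
    (PresentedGroup.of Gen.t)⁻¹ = PresentedGroup.of Gen.b * PresentedGroup.of Gen.a :=
  (conj_rel Gen.t Gen.a (FreeGroup.of Gen.b * FreeGroup.of Gen.a)
    (by simp [ffRels])).trans (by rw [_root_.map_mul]; rfl)

lemma t_b : PresentedGroup.of (rels := ffRels) Gen.t * PresentedGroup.of Gen.b *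
    (PresentedGroup.of Gen.t)⁻¹ = PresentedGroup.of Gen.b :=
  (conj_rel Gen.t Gen.b (FreeGroup.of Gen.b) (by simp [ffRels])).trans rfl

lemma t_c : PresentedGroup.of (rels := ffRels) Gen.t * PresentedGroup.of Gen.c *
    (PresentedGroup.of Gen.t)⁻¹ = PresentedGroup.of Gen.c :=
  (conj_rel Gen.t Gen.c (FreeGroup.of Gen.c) (by simp [ffRels])).trans rfl

lemma compat : ∀ u : F2,
    f₁.comp (α u).toMonoidHom = (MulAut.conj (f₂ u)).toMonoidHom.comp f₁ := by
  intro u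
  induction u using FreeGroup.induction_on with
  | C1 => ext x; simp
  | of i =>
    ext x
    simp only [MonoidHom.comp_apply, MulEquiv.coe_toMonoidHom, MulAut.conj_apply,
      FreeGroup.lift_apply_of]
    rw [α_of, σ_apply]
    cases i <;> cases x <;>
      simp only [act, if_true, if_false, Bool.cond_true, Bool.cond_false, _root_.map_mul, f₂, f₁,
        FreeGroup.lift_apply_of, abcMap, if_neg, Bool.false_eq_true, not_false_iff, ite_false, ite_true]
    · exact s_a.symm
    · exact s_b.symm
    · exact s_c.symm
    · exact t_a.symm
    · exact t_b.symm
    · exact t_c.symm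
  | inv_of i hu =>
    ext n
    have hu' := DFunLike.congr_fun hu ((α (of i)).symm (of n))
    simp only [MonoidHom.comp_apply, MulEquiv.coe_toMonoidHom, MulAut.conj_apply,
      MulEquiv.apply_symm_apply] at hu'
    show f₁ ((α ((of i : F2))⁻¹) (of n)) = (MulAut.conj (f₂ ((of i : F2))⁻¹)) (f₁ (of n))
    rw [_root_.map_inv α, _root_.map_inv f₂, MulAut.inv_def, MulAut.conj_apply, inv_inv, hu']
    group
  | mul u v hu hv =>
    ext n
    have hu' := DFunLike.congr_fun hu ((α v) (of n))
    have hv' := DFunLike.congr_fun hv (of n)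
    simp only [MonoidHom.comp_apply, MulEquiv.coe_toMonoidHom, MulAut.conj_apply] at hu' hv'
    show f₁ ((α (u * v)) (of n)) = (MulAut.conj (f₂ (u * v))) (f₁ (of n))
    rw [_root_.map_mul α, MulAut.mul_apply, hu', hv', MulAut.conj_apply, _root_.map_mul f₂]
    group

def ψ : K →* PresentedGroup ffRels := SemidirectProduct.lift f₁ f₂ compat

lemma ψφ : ψ.comp φ = MonoidHom.id _ := by
  ext x
  cases x <;>
    simp [φ, ψ, genMap, f₁, f₂, abcMap]

lemma ψφ_apply (g : PresentedGroup ffRels) : ψ (φ g) = g :=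
  DFunLike.congr_fun ψφ g



private lemma cons_eq_append_singleton {β : Type*} {u : β} :
    ∀ (M : List β), u :: M = M ++ [u] → ∀ v ∈ M, v = u := by
  intro M
  induction M with
  | nil => intro _ v hv; simp at hv
  | cons a M ih =>
    intro h v hv
    rw [List.cons_append] at h
    obtain ⟨h1, h2⟩ := List.cons.injEq .. ▸ h
    rcases hv with _ | hv
    · exact h1.symm
    · subst h1; exact ih h2 _ (by assumption)

private lemma reduce_cons_cons {α : Type*} [DecidableEq α] (u v : α × Bool) (L : List (α × Bool))
    (h : reduce (v :: L) = v :: L) :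
    reduce (u :: v :: L) = if u.1 = v.1 ∧ u.2 = !v.2 then L else u :: v :: L := by
  rw [reduce.cons, h]

private lemma of_eq_mk {α : Type*} (y : α) : (of y : FreeGroup α) = mk [(y, true)] := rfl

private lemma inv_of_eq_mk {α : Type*} (y : α) : ((of y)⁻¹ : FreeGroup α) = mk [(y, false)] := by
  rw [of_eq_mk, inv_mk]; rfl

private lemma toWord_of_mul {α : Type*} [DecidableEq α] (y : α) (w : FreeGroup α) :
    (of y * w).toWord = reduce ((y, true) :: w.toWord) := by
  have : of y * w = mk ((y, true) :: w.toWord) := by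
    conv_lhs => rw [← mk_toWord (x := w)]
    rw [of_eq_mk, mul_mk]
    rfl
  rw [this, toWord_mk]

private lemma toWord_inv_of_mul {α : Type*} [DecidableEq α] (y : α) (w : FreeGroup α) :
    ((of y)⁻¹ * w).toWord = reduce ((y, false) :: w.toWord) := by
  have : (of y)⁻¹ * w = mk ((y, false) :: w.toWord) := by
    conv_lhs => rw [← mk_toWord (x := w)]
    rw [inv_of_eq_mk, mul_mk]
    rfl
  rw [this, toWord_mk]

private lemma toWord_mul_of {α : Type*} [DecidableEq α] (w : FreeGroup α) (y : α) :
    (w * of y).toWord = reduce (w.toWord ++ [(y, true)]) := by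
  have : w * of y = mk (w.toWord ++ [(y, true)]) := by
    conv_lhs => rw [← mk_toWord (x := w)]
    rw [of_eq_mk, mul_mk]
  rw [this, toWord_mk]

theorem commute_gen_eq_zpow {α : Type*} [DecidableEq α] (x : α) :
    ∀ (n : ℕ) (w : FreeGroup α), w.toWord.length ≤ n →
      w * of x = of x * w → ∃ k : ℤ, w = of x ^ k := by
  intro n
  induction n with
  | zero =>
    intro w hlen _
    exact ⟨0, by rw [zpow_zero, ← toWord_eq_nil_iff, List.length_eq_zero_iff.mp (Nat.le_zero.mp hlen)]⟩
  | succ n ih =>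
    intro w hlen h
    rcases hL : w.toWord with _ | ⟨⟨y, b⟩, L'⟩
    · exact ⟨0, by rw [zpow_zero, ← toWord_eq_nil_iff, hL]⟩
    have hred : reduce w.toWord = w.toWord := reduce_toWord w
    have hred' : reduce ((y, b) :: L') = (y, b) :: L' := by rw [← hL]; exact hred
    have hlenL : w.toWord.length = L'.length + 1 := by rw [hL]; simp
    by_cases hxy : y = x
    · subst hxy
      cases b with
      | true =>
        have hw' : ((of y)⁻¹ * w).toWord = L' := by
          rw [toWord_inv_of_mul, hL, reduce_cons_cons _ _ _ hred']
          simp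
        have hcomm : (of y)⁻¹ * w * of y = of y * ((of y)⁻¹ * w) := by
          rw [mul_assoc, h]; group
        have hlen' : ((of y)⁻¹ * w).toWord.length ≤ n := by
          rw [hw']; omega
        obtain ⟨k, hk⟩ := ih _ hlen' hcomm
        refine ⟨1 + k, ?_⟩
        have hw : w = of y * ((of y)⁻¹ * w) := by group
        rw [hw, hk]; group
      | false =>
        have hw' : (of y * w).toWord = L' := by
          rw [toWord_of_mul, hL, reduce_cons_cons _ _ _ hred']
          simp
        have hcomm : of y * w * of y = of y * (of y * w) := by
          rw [mul_assoc, h]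
        have hlen' : (of y * w).toWord.length ≤ n := by
          rw [hw']; omega
        obtain ⟨k, hk⟩ := ih _ hlen' hcomm
        refine ⟨-1 + k, ?_⟩
        have hw : w = (of y)⁻¹ * (of y * w) := by group
        rw [hw, hk]; group
    · exfalso
      have e1 : (of x * w).toWord = (x, true) :: w.toWord := by
        rw [toWord_of_mul, hL, reduce_cons_cons _ _ _ hred',
          if_neg (fun hc => hxy hc.1.symm), ← hL]
      have key : reduce (w.toWord ++ [(x, true)]) = (x, true) :: w.toWord := by
        rw [← toWord_mul_of, h, e1]
      have hredInv : reduce (invRev w.toWord) = invRev w.toWord := by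
        rw [reduce_invRev, hred]
      have e4 : invRev (w.toWord ++ [(x, true)]) = (x, false) :: invRev w.toWord := by
        simp [invRev]
      have e5 : invRev ((x, true) :: w.toWord) = invRev w.toWord ++ [(x, false)] := by
        simp [invRev]
      have star : reduce ((x, false) :: invRev w.toWord) = invRev w.toWord ++ [(x, false)] := by
        rw [← e4, ← e5, reduce_invRev, key]
      rcases hM : invRev w.toWord with _ | ⟨⟨z, c⟩, M⟩
      · have := invRev_length (L₁ := w.toWord)
        rw [hM] at this; rw [hL] at this; simp at this
      have hredM : reduce ((z, c) :: M) = (z, c) :: M := by rw [← hM]; exact hredInv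
      rw [hM, reduce_cons_cons _ _ _ hredM] at star
      by_cases hcancel : x = z ∧ false = !c
      · rw [if_pos hcancel] at star
        have h2 := congrArg List.length star
        simp at h2
        omega
      · rw [if_neg hcancel] at star
        rw [List.cons_append] at star
        obtain ⟨h1, h2⟩ := List.cons.injEq .. ▸ star
        have hz : z = x := ((Prod.ext_iff.mp h1).1).symm
        have hc : c = false := ((Prod.ext_iff.mp h1).2).symm
        rw [hz, hc] at h2 hM
        have hall : ∀ v ∈ M, v = (x, false) := cons_eq_append_singleton M h2
        have hmem : ((y, b) : α × Bool) ∈ w.toWord := by rw [hL]; exact List.mem_cons_self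
        have : w.toWord = invRev ((x, false) :: M) := by rw [← hM, invRev_invRev]
        rw [this] at hmem
        simp only [invRev, List.mem_reverse, List.mem_map] at hmem
        obtain ⟨u, hu, huv⟩ := hmem
        have : u = (x, false) := by
          rcases hu with _ | hu
          · rfl
          · exact hall _ (by assumption)
        rw [this] at huv
        apply hxy
        exact (Prod.mk.injEq .. ▸ huv).1.symm

lemma centralizer_eq (xg : Gen) (xa : ABC)
    (hmap : genMap xg = inl (of xa))
    (hfix : ∀ u : F2, α u (of xa) = of xa)
    (hf₁ : abcMap xa = PresentedGroup.of xg)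
    (hs : PresentedGroup.of (rels := ffRels) Gen.s * PresentedGroup.of xg *
      (PresentedGroup.of Gen.s)⁻¹ = PresentedGroup.of xg)
    (ht : PresentedGroup.of (rels := ffRels) Gen.t * PresentedGroup.of xg *
      (PresentedGroup.of Gen.t)⁻¹ = PresentedGroup.of xg) :
    Subgroup.centralizer {(PresentedGroup.of xg : PresentedGroup ffRels)} =
      Subgroup.closure
        {PresentedGroup.of xg, PresentedGroup.of Gen.s, PresentedGroup.of Gen.t} := by
  apply le_antisymm
  · -- centralizer ≤ closure
    intro g hg
    have hcomm : PresentedGroup.of xg * g = g * PresentedGroup.of xg :=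
      Subgroup.mem_centralizer_iff.mp hg _ rfl
    -- move to the model
    have hφ : φ (PresentedGroup.of xg) * φ g = φ g * φ (PresentedGroup.of xg) := by
      rw [← _root_.map_mul, ← _root_.map_mul, hcomm]
    rw [φ_of, hmap] at hφ
    set w : F3 := (φ g).left with hw
    set u : F2 := (φ g).right with hu
    have hleft := congrArg SemidirectProduct.left hφ
    simp only [mul_left, left_inl, right_inl, _root_.map_one, MulAut.one_apply, hfix] at hleft
    -- hleft : of xa * w = w * of xa   (check orientation)
    obtain ⟨k, hk⟩ := commute_gen_eq_zpow xa w.toWord.length w le_rfl (by rw [hleft])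
    have hdecomp : g = f₁ w * f₂ u := by
      conv_lhs => rw [← ψφ_apply g]
      rw [← inl_left_mul_inr_right (φ g), _root_.map_mul]
      rw [show ψ (inl (φ g).left) = f₁ (φ g).left from lift_inl _ _ compat _,
        show ψ (inr (φ g).right) = f₂ (φ g).right from lift_inr _ _ compat _]
    rw [hdecomp, hk, _root_.map_zpow]
    have hb : (f₁ (of xa) : PresentedGroup ffRels) = PresentedGroup.of xg := by
      rw [f₁, FreeGroup.lift_apply_of, hf₁]
    rw [hb]
    apply mul_mem
    · exact zpow_mem (Subgroup.subset_closure (Set.mem_insert _ _)) k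
    · have : f₂.range ≤ Subgroup.closure
          {PresentedGroup.of (rels := ffRels) xg, PresentedGroup.of Gen.s,
            PresentedGroup.of Gen.t} := by
        apply FreeGroup.range_lift_le
        rintro x ⟨i, rfl⟩
        cases i
        · simp only [if_neg Bool.false_ne_true]
          exact Subgroup.subset_closure (Set.mem_insert_of_mem _ (Set.mem_insert _ _))
        · simp only [if_pos rfl]
          exact Subgroup.subset_closure
            (Set.mem_insert_of_mem _ (Set.mem_insert_of_mem _ rfl))
      exact this ⟨u, rfl⟩
  · -- closure ≤ centralizer
    rw [Subgroup.closure_le]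
    rintro g (rfl | rfl | rfl) <;>
      rw [SetLike.mem_coe, Subgroup.mem_centralizer_iff] <;>
      rintro h rfl
    · rfl
    · exact (mul_inv_eq_iff_eq_mul.mp hs).symm
    · exact (mul_inv_eq_iff_eq_mul.mp ht).symm

end FFModel

/-- In `G`: `C_G(b) = ⟨b, s, t⟩` and `C_G(c) = ⟨c, s, t⟩`. -/
theorem centralizer_b_c_ff :
    Subgroup.centralizer {(PresentedGroup.of Gen.b : PresentedGroup ffRels)} =
      Subgroup.closure
        {PresentedGroup.of Gen.b, PresentedGroup.of Gen.s, PresentedGroup.of Gen.t} ∧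
    Subgroup.centralizer {(PresentedGroup.of Gen.c : PresentedGroup ffRels)} =
      Subgroup.closure
        {PresentedGroup.of Gen.c, PresentedGroup.of Gen.s, PresentedGroup.of Gen.t} :=
  ⟨FFModel.centralizer_eq Gen.b FFModel.ABC.b rfl FFModel.α_fix_b rfl FFModel.s_b FFModel.t_b,
   FFModel.centralizer_eq Gen.c FFModel.ABC.c rfl FFModel.α_fix_c rfl FFModel.s_c FFModel.t_c⟩
end

section
/- Let G = ⟨a, b, c, s, t | sas⁻¹ = ab, sbs⁻¹ = b, scs⁻¹ = c, tat⁻¹ = ba, tbt⁻¹ = b, tct⁻¹ = c⟩. Then for every nonzero integer k, the centraliser of stᵏ in G is the subgroup generated by {b, c, stᵏ}. -/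
namespace FFcent


/-- A free group in which all elements commute is cyclic. -/
lemma freegroup_comm_cyclic (G : Type) [Group G] [IsFreeGroup G]
    (hcomm : ∀ x y : G, x * y = y * x) : ∃ r : G, ∀ z : G, ∃ m : ℤ, z = r ^ m := by
  classical
  set e := IsFreeGroup.toFreeGroup (G := G) with he
  by_cases hne : ∃ x y : IsFreeGroup.Generators G, x ≠ y
  · exfalso
    obtain ⟨x, y, hxy⟩ := hne
    have h := hcomm (e.symm (FreeGroup.of x)) (e.symm (FreeGroup.of y))
    have h2 : (FreeGroup.of x) * (FreeGroup.of y) = FreeGroup.of y * FreeGroup.of x := by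
      have := congrArg e h
      simpa using this
    have h3 := congrArg (FreeGroup.lift
      (fun z => if z = x then (FreeGroup.of true : FreeGroup Bool) else FreeGroup.of false)) h2
    simp only [map_mul, FreeGroup.lift_apply_of, if_pos rfl, if_neg (Ne.symm hxy)] at h3
    revert h3; decide
  · push_neg at hne
    by_cases hnon : Nonempty (IsFreeGroup.Generators G)
    · obtain ⟨x₀⟩ := hnon
      refine ⟨e.symm (FreeGroup.of x₀), fun z => ?_⟩
      obtain ⟨m, hm⟩ : ∃ m : ℤ, e z = (FreeGroup.of x₀ : FreeGroup _) ^ m := by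
        induction (e z) using FreeGroup.induction_on with
        | C1 => exact ⟨0, by simp⟩
        | of x => exact ⟨1, by rw [hne x x₀, zpow_one]⟩
        | inv_of x ih => obtain ⟨m, hm⟩ := ih; exact ⟨-m, by rw [hm]; simp⟩
        | mul x y ihx ihy =>
          obtain ⟨m, hm⟩ := ihx; obtain ⟨n, hn⟩ := ihy
          exact ⟨m + n, by rw [hm, hn, zpow_add]⟩
      refine ⟨m, ?_⟩
      have := congrArg e.symm hm
      simpa using this
    · refine ⟨1, fun z => ⟨0, ?_⟩⟩
      have : e z = 1 := by
        induction (e z) using FreeGroup.induction_on with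
        | C1 => rfl
        | of x => exact absurd ⟨x⟩ hnon
        | inv_of x ih => rw [ih]; simp
        | mul x y ihx ihy => rw [ihx, ihy]; simp
      have := congrArg e.symm this
      simpa using this



inductive V2 | S | T deriving DecidableEq

abbrev FB := FreeGroup V2

def g₀ (k : ℤ) : FB := FreeGroup.of V2.S * FreeGroup.of V2.T ^ k

def sexp : FB →* Multiplicative ℤ :=
  FreeGroup.lift (fun v => Multiplicative.ofAdd (match v with | .S => 1 | .T => 0))

lemma sexp_g₀ (k : ℤ) : sexp (g₀ k) = Multiplicative.ofAdd 1 := by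
  simp [g₀, sexp, FreeGroup.lift_apply_of]

/-- Lemma A: the centraliser of `s·tᵏ` in the free group on `{s,t}`. -/
lemma lemA (k : ℤ) (u : FB) (hc : u * g₀ k = g₀ k * u) : u ∈ Subgroup.zpowers (g₀ k) := by
  set Z := Subgroup.closure ({u, g₀ k} : Set FB) with hZ
  have hu : u ∈ Z := Subgroup.subset_closure (by simp)
  have hg : g₀ k ∈ Z := Subgroup.subset_closure (by simp)
  have hZcomm : ∀ x y : Z, x * y = y * x := by
    rintro ⟨x, hx⟩ ⟨y, hy⟩
    have key : ∀ a b : FB, a ∈ Z → b ∈ Z → a * b = b * a := by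
      intro a b ha hb
      refine Subgroup.closure_induction₂ (p := fun a b _ _ => Commute a b)
        ?_ (fun x _ => Commute.one_left x) (fun x _ => Commute.one_right x)
        (fun x y z _ _ _ h1 h2 => h1.mul_left h2)
        (fun y z x _ _ _ h1 h2 => h1.mul_right h2)
        (fun x y _ _ h => h.inv_left) (fun x y _ _ h => h.inv_right) ha hb
      rintro x y (rfl | rfl) (rfl | rfl)
      · rfl
      · exact hc
      · exact hc.symm
      · rfl
    exact Subtype.ext (key x y hx hy)
  obtain ⟨r, hr⟩ := freegroup_comm_cyclic Z hZcomm
  obtain ⟨d, hd⟩ := hr ⟨g₀ k, hg⟩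
  obtain ⟨m, hm⟩ := hr ⟨u, hu⟩
  have hdc : g₀ k = (r : FB) ^ d := by
    have := congrArg (Subtype.val) hd
    simpa using this
  have hmc : u = (r : FB) ^ m := by
    have := congrArg (Subtype.val) hm
    simpa using this
  have hunit : d * Multiplicative.toAdd (sexp (r : FB)) = 1 := by
    have h1 := congrArg (fun x => Multiplicative.toAdd (sexp x)) hdc
    simp only [map_zpow, toAdd_zpow, sexp_g₀, toAdd_ofAdd, smul_eq_mul] at h1
    linarith
  rcases Int.isUnit_iff.mp (IsUnit.of_mul_eq_one _ hunit) with h1 | h1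
  · rw [h1, zpow_one] at hdc
    rw [Subgroup.mem_zpowers_iff]
    exact ⟨m, by rw [hmc, hdc]⟩
  · rw [h1, zpow_neg_one] at hdc
    have hr' : (r : FB) = (g₀ k)⁻¹ := by rw [hdc, inv_inv]
    rw [Subgroup.mem_zpowers_iff]
    exact ⟨-m, by rw [hmc, hr', ← zpow_neg_one, ← zpow_mul]; ring_nf⟩


inductive V3 | A | B | C deriving DecidableEq

abbrev F3 := FreeGroup V3
abbrev F2 := FreeGroup Bool

def Bf : F2 := FreeGroup.of false

/-- validity condition for normal forms -/
def ok (l : List (Bool × F2)) : Prop := List.Chain' (fun p q => p.2 = 1 → p.1 = q.1) l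

def NF := { x : F2 × List (Bool × F2) // ok x.2 }

/-- raw left multiplication by `A` -/
def rawA : F2 × List (Bool × F2) → F2 × List (Bool × F2)
  | (u, []) => (1, [(true, u)])
  | (u, (true, v) :: r) => (1, (true, u) :: (true, v) :: r)
  | (u, (false, v) :: r) => if u = 1 then (v, r) else (1, (true, u) :: (false, v) :: r)

/-- raw left multiplication by `A⁻¹` -/
def rawA' : F2 × List (Bool × F2) → F2 × List (Bool × F2)
  | (u, []) => (1, [(false, u)])
  | (u, (false, v) :: r) => (1, (false, u) :: (false, v) :: r)
  | (u, (true, v) :: r) => if u = 1 then (v, r) else (1, (false, u) :: (true, v) :: r)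

lemma ok_rawA : ∀ x : F2 × List (Bool × F2), ok x.2 → ok (rawA x).2
  | (u, []), _ => by simp [rawA, ok, List.Chain']
  | (u, (true, v) :: r), h => by
    simp only [rawA, ok, List.Chain', List.isChain_cons_cons] at h ⊢
    exact ⟨fun _ => trivial, h⟩
  | (u, (false, v) :: r), h => by
    by_cases hu : u = 1
    · simpa [rawA, hu, ok, List.Chain'] using (List.IsChain.tail h)
    · simp only [rawA, if_neg hu, ok, List.Chain', List.isChain_cons_cons] at h ⊢
      exact ⟨fun h1 => absurd h1 hu, h⟩

lemma ok_rawA' : ∀ x : F2 × List (Bool × F2), ok x.2 → ok (rawA' x).2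
  | (u, []), _ => by simp [rawA', ok, List.Chain']
  | (u, (false, v) :: r), h => by
    simp only [rawA', ok, List.Chain', List.isChain_cons_cons] at h ⊢
    exact ⟨fun _ => trivial, h⟩
  | (u, (true, v) :: r), h => by
    by_cases hu : u = 1
    · simpa [rawA', hu, ok, List.Chain'] using (List.IsChain.tail h)
    · simp only [rawA', if_neg hu, ok, List.Chain', List.isChain_cons_cons] at h ⊢
      exact ⟨fun h1 => absurd h1 hu, h⟩

lemma rawA'_rawA : ∀ x : F2 × List (Bool × F2), ok x.2 → rawA' (rawA x) = x
  | (u, []), _ => by simp [rawA, rawA']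
  | (u, (true, v) :: r), h => by simp [rawA, rawA']
  | (u, (false, v) :: r), h => by
    by_cases hu : u = 1
    · subst hu
      simp only [rawA, if_pos rfl]
      match r with
      | [] => simp [rawA']
      | (false, w) :: r' => simp [rawA']
      | (true, w) :: r' =>
        have hv : v ≠ 1 := by
          intro hv1
          have := (List.isChain_cons_cons.mp h).1 hv1
          simp at this
        simp [rawA', if_neg hv]
    · simp [rawA, rawA', if_neg hu]

lemma rawA_rawA' : ∀ x : F2 × List (Bool × F2), ok x.2 → rawA (rawA' x) = x
  | (u, []), _ => by simp [rawA, rawA']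
  | (u, (false, v) :: r), h => by simp [rawA, rawA']
  | (u, (true, v) :: r), h => by
    by_cases hu : u = 1
    · subst hu
      simp only [rawA', if_pos rfl]
      match r with
      | [] => simp [rawA]
      | (true, w) :: r' => simp [rawA]
      | (false, w) :: r' =>
        have hv : v ≠ 1 := by
          intro hv1
          have := (List.isChain_cons_cons.mp h).1 hv1
          simp at this
        simp [rawA, if_neg hv]
    · simp [rawA', rawA, if_neg hu]

/-- the permutation of normal forms given by left multiplication by `A` -/
def actA : Equiv.Perm NF where
  toFun x := ⟨rawA x.1, ok_rawA x.1 x.2⟩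
  invFun x := ⟨rawA' x.1, ok_rawA' x.1 x.2⟩
  left_inv x := Subtype.ext (rawA'_rawA x.1 x.2)
  right_inv x := Subtype.ext (rawA_rawA' x.1 x.2)

/-- the permutation of normal forms given by left multiplication by an element of `⟨B,C⟩` -/
def actHead : F2 →* Equiv.Perm NF where
  toFun v :=
    { toFun := fun x => ⟨(v * x.1.1, x.1.2), x.2⟩
      invFun := fun x => ⟨(v⁻¹ * x.1.1, x.1.2), x.2⟩
      left_inv := fun x => by simp; rfl
      right_inv := fun x => by simp; rfl }
  map_one' := by
    ext x
    simp [NF]; rfl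
  map_mul' v w := by
    ext x
    simp [mul_assoc, NF]; rfl

def ρ : F3 →* Equiv.Perm NF :=
  FreeGroup.lift (fun g => match g with
    | V3.A => actA
    | V3.B => actHead (FreeGroup.of false)
    | V3.C => actHead (FreeGroup.of true))

def ι : F2 →* F3 :=
  FreeGroup.lift (fun b => if b then FreeGroup.of V3.C else FreeGroup.of V3.B)

def evalE (p : Bool × F2) : F3 :=
  (if p.1 then FreeGroup.of V3.A else (FreeGroup.of V3.A)⁻¹) * ι p.2

def evalR (x : F2 × List (Bool × F2)) : F3 := ι x.1 * (x.2.map evalE).prod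

lemma evalR_rawA (x : F2 × List (Bool × F2)) :
    evalR (rawA x) = FreeGroup.of V3.A * evalR x := by
  obtain ⟨u, l⟩ := x
  match l with
  | [] => simp [rawA, evalR, evalE, mul_assoc]
  | (true, v) :: r => simp [rawA, evalR, evalE, mul_assoc]
  | (false, v) :: r =>
    by_cases hu : u = 1
    · subst hu
      simp [rawA, evalR, evalE, mul_assoc]
    · simp [rawA, if_neg hu, evalR, evalE, mul_assoc]

lemma key1 (w : F3) : ∀ x : NF, evalR ((ρ w) x).1 = w * evalR x.1 := by
  have pure_eq : ∀ g : V3, (pure g : F3) = FreeGroup.of g := fun _ => rfl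
  induction w using FreeGroup.induction_on with
  | C1 => intro x; simp
  | of g =>
    intro x
    cases g with
    | A =>
      have : ρ (FreeGroup.of V3.A) = actA := FreeGroup.lift_apply_of
      rw [this]
      exact evalR_rawA x.1
    | B =>
      have : ρ (FreeGroup.of V3.B) = actHead (FreeGroup.of false) := FreeGroup.lift_apply_of
      rw [this]
      show evalR (FreeGroup.of false * x.1.1, x.1.2) = _
      simp [actHead, evalR, ι, mul_assoc, Equiv.coe_fn_mk]
    | C =>
      have : ρ (FreeGroup.of V3.C) = actHead (FreeGroup.of true) := FreeGroup.lift_apply_of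
      rw [this]
      show evalR (FreeGroup.of true * x.1.1, x.1.2) = _
      simp [actHead, evalR, ι, mul_assoc, Equiv.coe_fn_mk]
  | inv_of g ih =>
    intro x
    rw [map_inv]
    have h := ih (((ρ (FreeGroup.of g))⁻¹) x)
    rw [show ∀ (σ : Equiv.Perm NF) y, σ (σ⁻¹ y) = y from fun σ y => σ.apply_symm_apply y] at h
    rw [← inv_mul_cancel_left (FreeGroup.of g) (evalR ((((ρ (FreeGroup.of g))⁻¹) x)).1), ← h]
  | mul y z ihy ihz =>
    intro x
    rw [map_mul]
    have : (ρ y * ρ z) x = ρ y (ρ z x) := rfl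
    rw [this, ihy, ihz, mul_assoc]


def pre (k : ℤ) (ε : Bool) : F2 := if ε then Bf ^ k else Bf⁻¹

def suf (k : ℤ) (ε : Bool) : F2 := if ε then Bf else Bf ^ (-k)

def mapT (k : ℤ) : List (Bool × F2) → List (Bool × F2)
  | [] => []
  | (ε, u) :: r =>
    (ε, suf k ε * u * (match r with | [] => 1 | (ε', _) :: _ => pre k ε')) :: mapT k r

def phiN (k : ℤ) : F2 × List (Bool × F2) → F2 × List (Bool × F2)
  | (u, []) => (u, [])
  | (u, (ε, v) :: r) => (u * pre k ε, mapT k ((ε, v) :: r))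

lemma mul_mul_eq_one {a u b : F2} (h : a * u * b = 1) : u = a⁻¹ * b⁻¹ := by
  have h2 : a * u = b⁻¹ := mul_eq_one_iff_eq_inv.mp h
  exact eq_inv_mul_iff_mul_eq.mpr h2

lemma sufpre_eq_one {k : ℤ} {ε ε' : Bool} {u : F2} (hne : ε ≠ ε')
    (h : suf k ε * u * pre k ε' = 1) : u = 1 := by
  have hu := mul_mul_eq_one h
  cases ε <;> cases ε'
  · exact absurd rfl hne
  · rw [hu]; simp [suf, pre, ← zpow_neg, ← zpow_add]
  · rw [hu]; simp [suf, pre]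
  · exact absurd rfl hne

lemma ok_mapT (k : ℤ) : ∀ l : List (Bool × F2), ok l → ok (mapT k l)
  | [], _ => by simp [mapT, ok, List.Chain']
  | [(ε, u)], _ => by simp [mapT, ok, List.Chain']
  | (ε, u) :: (ε', u') :: r, h => by
    have h1 := (List.isChain_cons_cons.mp h).1
    have h2 := (List.isChain_cons_cons.mp h).2
    have ih := ok_mapT k ((ε', u') :: r) h2
    simp only [mapT, ok, List.Chain', List.isChain_cons_cons] at ih ⊢
    refine ⟨fun hone => ?_, by simpa [ok, mapT, List.Chain'] using ih⟩
    by_cases he : ε = ε'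
    · exact he
    · exact h1 (sufpre_eq_one he hone)

/-- `phiN` preserves `ok` -/
lemma ok_phiN (k : ℤ) : ∀ x : F2 × List (Bool × F2), ok x.2 → ok (phiN k x).2
  | (u, []), h => by simpa [phiN] using h
  | (u, (ε, v) :: r), h => by
    simpa [phiN] using ok_mapT k ((ε, v) :: r) h

def PhiNF (k : ℤ) : NF → NF := fun x => ⟨phiN k x.1, ok_phiN k x.1 x.2⟩

def mulHead (v : F2) (x : F2 × List (Bool × F2)) : F2 × List (Bool × F2) := (v * x.1, x.2)

lemma conj_eq_one_iff (v u : F2) : v * (u * v⁻¹) = 1 ↔ u = 1 := by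
  constructor
  · intro h
    rw [← mul_assoc] at h
    have := mul_mul_eq_one h
    simpa using this
  · intro h; simp [h]

lemma rawInterHead (k : ℤ) (v : F2) (x : F2 × List (Bool × F2)) :
    mulHead v (phiN k x) = phiN k (mulHead v x) := by
  obtain ⟨u, l⟩ := x
  match l with
  | [] => simp [phiN, mulHead]
  | (ε, w) :: r => simp [phiN, mulHead, mul_assoc]

lemma rawInterA (k : ℤ) (x : F2 × List (Bool × F2)) :
    mulHead (Bf ^ k) (rawA (mulHead Bf (phiN k x))) = phiN k (rawA x) := by
  obtain ⟨u, l⟩ := x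
  match l with
  | [] =>
    simp [phiN, mulHead, rawA, mapT, suf, pre, mul_assoc]
  | (true, v) :: r =>
    simp [phiN, mulHead, rawA, mapT, suf, pre, mul_assoc]
  | (false, v) :: r =>
    by_cases hu : u = 1
    · subst hu
      have hone : Bf * (1 * pre k false) = 1 := by simp [pre]
      match r with
      | [] =>
        simp [phiN, mulHead, rawA, mapT, suf, pre, mul_assoc, ← zpow_add]
      | (ε₂, v₂) :: r₂ =>
        simp [phiN, mulHead, rawA, mapT, suf, pre, mul_assoc, ← zpow_add]
    · have hne : Bf * (u * Bf⁻¹) ≠ 1 := fun h => hu ((conj_eq_one_iff Bf u).mp h)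
      simp [phiN, mulHead, rawA, if_neg hu, if_neg hne, mapT, suf, pre, mul_assoc]


def φk (k : ℤ) : F3 →* F3 :=
  FreeGroup.lift (fun g => match g with
    | V3.A => (FreeGroup.of V3.B) ^ k * FreeGroup.of V3.A * FreeGroup.of V3.B
    | V3.B => FreeGroup.of V3.B
    | V3.C => FreeGroup.of V3.C)

lemma interA (k : ℤ) (x : NF) :
    ρ (φk k (FreeGroup.of V3.A)) (PhiNF k x) = PhiNF k (actA x) := by
  have h1 : φk k (FreeGroup.of V3.A)
      = (FreeGroup.of V3.B) ^ k * FreeGroup.of V3.A * FreeGroup.of V3.B := FreeGroup.lift_apply_of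
  have h2 : ρ (FreeGroup.of V3.B) = actHead Bf := FreeGroup.lift_apply_of
  have h3 : ρ (FreeGroup.of V3.A) = actA := FreeGroup.lift_apply_of
  rw [h1, map_mul, map_mul, map_zpow, h2, h3, ← map_zpow actHead]
  apply Subtype.ext
  exact rawInterA k x.1

lemma interT (k : ℤ) (w : F3) : ∀ x : NF, ρ (φk k w) (PhiNF k x) = PhiNF k (ρ w x) := by
  have pure_eq : ∀ g : V3, (pure g : F3) = FreeGroup.of g := fun _ => rfl
  induction w using FreeGroup.induction_on with
  | C1 => intro x; simp
  | of g =>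
    intro x
    cases g with
    | A =>
      rw [show ρ (FreeGroup.of V3.A) = actA from FreeGroup.lift_apply_of]
      exact interA k x
    | B =>
      have h1 : φk k (FreeGroup.of V3.B) = FreeGroup.of V3.B := FreeGroup.lift_apply_of
      have h2 : ρ (FreeGroup.of V3.B) = actHead Bf := FreeGroup.lift_apply_of
      rw [h1, h2]
      exact Subtype.ext (rawInterHead k Bf x.1)
    | C =>
      have h1 : φk k (FreeGroup.of V3.C) = FreeGroup.of V3.C := FreeGroup.lift_apply_of
      have h2 : ρ (FreeGroup.of V3.C) = actHead (FreeGroup.of true) := FreeGroup.lift_apply_of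
      rw [h1, h2]
      exact Subtype.ext (rawInterHead k (FreeGroup.of true) x.1)
  | inv_of g ih =>
    intro x
    simp only [map_inv]
    have h := ih ((ρ (FreeGroup.of g))⁻¹ x)
    rw [show ∀ (σ : Equiv.Perm NF) y, σ (σ⁻¹ y) = y from fun σ y => σ.apply_symm_apply y] at h
    rw [← h, show ∀ (σ : Equiv.Perm NF) y, σ⁻¹ (σ y) = y from fun σ y => σ.symm_apply_apply y]
  | mul y z ihy ihz =>
    intro x
    have hyz : ∀ (σ τ : Equiv.Perm NF) (a : NF), (σ * τ) a = σ (τ a) := fun _ _ _ => rfl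
    simp only [map_mul, hyz]
    rw [ihz, ihy]

def nf₀ : NF := ⟨(1, []), List.isChain_nil⟩

def cnt : F2 →* Multiplicative ℤ :=
  FreeGroup.lift (fun b => Multiplicative.ofAdd (if b then 0 else 1))

lemma Bf_zpow_ne_one {k : ℤ} (hk : k ≠ 0) : Bf ^ k ≠ 1 := by
  intro h
  have h2 := congrArg cnt h
  rw [map_zpow, map_one] at h2
  have h3 : cnt Bf = Multiplicative.ofAdd 1 := by simp [cnt, Bf]
  rw [h3, ← ofAdd_zsmul] at h2
  simp at h2
  exact hk h2

lemma pre_ne_one {k : ℤ} (hk : k ≠ 0) (ε : Bool) : pre k ε ≠ 1 := by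
  cases ε
  · simp only [pre, if_neg Bool.false_ne_true]
    intro h
    rw [inv_eq_one] at h
    exact Bf_zpow_ne_one (k := 1) one_ne_zero (by simpa using h)
  · simpa [pre] using Bf_zpow_ne_one hk

lemma ι_mem (u : F2) :
    ι u ∈ Subgroup.closure ({FreeGroup.of V3.B, FreeGroup.of V3.C} : Set F3) := by
  induction u using FreeGroup.induction_on with
  | C1 => rw [map_one]; exact one_mem _
  | of b =>
    have : ι (FreeGroup.of b) = if b then FreeGroup.of V3.C else FreeGroup.of V3.B := FreeGroup.lift_apply_of
    rw [this]
    cases b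
    · exact Subgroup.subset_closure (by simp)
    · exact Subgroup.subset_closure (by simp)
  | inv_of b ih => rw [map_inv]; exact inv_mem ih
  | mul y z ihy ihz => rw [map_mul]; exact mul_mem ihy ihz

/-- Lemma B : the fixed subgroup of the automorphism `A ↦ BᵏABᵏ`... is `⟨B,C⟩`. -/
lemma lemB (k : ℤ) (hk : k ≠ 0) (w : F3) (hfix : φk k w = w) :
    w ∈ Subgroup.closure ({FreeGroup.of V3.B, FreeGroup.of V3.C} : Set F3) := by
  have h0 : PhiNF k nf₀ = nf₀ := Subtype.ext rfl
  have h1 : PhiNF k (ρ w nf₀) = ρ w nf₀ := by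
    rw [← interT k w nf₀, h0, hfix]
  have h2 : evalR (ρ w nf₀).1 = w := by
    have := key1 w nf₀
    simpa [nf₀, evalR] using this
  have h1' : phiN k (ρ w nf₀ : NF).1 = (ρ w nf₀ : NF).1 := congrArg Subtype.val h1
  rcases hp : ((ρ w nf₀ : NF).1) with ⟨u, l⟩
  rw [hp] at h1' h2
  match l, h1', h2 with
  | [], h1', h2 =>
    rw [← h2]
    simpa [evalR] using ι_mem u
  | (ε, v) :: r, h1', h2 =>
    exfalso
    have hfst : u * pre k ε = u := by
      have := congrArg Prod.fst h1'
      simpa [phiN] using this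
    have hpre : pre k ε = 1 := mul_left_cancel (a := u) (by rw [hfst, mul_one])
    exact pre_ne_one hk ε hpre

section Action

def fs : F3 →* F3 :=
  FreeGroup.lift (fun g => match g with
    | V3.A => FreeGroup.of V3.A * FreeGroup.of V3.B
    | V3.B => FreeGroup.of V3.B
    | V3.C => FreeGroup.of V3.C)

def fs' : F3 →* F3 :=
  FreeGroup.lift (fun g => match g with
    | V3.A => FreeGroup.of V3.A * (FreeGroup.of V3.B)⁻¹
    | V3.B => FreeGroup.of V3.B
    | V3.C => FreeGroup.of V3.C)

def ft : F3 →* F3 :=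
  FreeGroup.lift (fun g => match g with
    | V3.A => FreeGroup.of V3.B * FreeGroup.of V3.A
    | V3.B => FreeGroup.of V3.B
    | V3.C => FreeGroup.of V3.C)

def ft' : F3 →* F3 :=
  FreeGroup.lift (fun g => match g with
    | V3.A => (FreeGroup.of V3.B)⁻¹ * FreeGroup.of V3.A
    | V3.B => FreeGroup.of V3.B
    | V3.C => FreeGroup.of V3.C)

def φs : MulAut F3 :=
  MonoidHom.toMulEquiv fs fs'
    (FreeGroup.ext_hom _ _ (by rintro (_ | _ | _) <;>
      simp [fs, fs', FreeGroup.lift_apply_of, mul_assoc]))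
    (FreeGroup.ext_hom _ _ (by rintro (_ | _ | _) <;>
      simp [fs, fs', FreeGroup.lift_apply_of, mul_assoc]))

def φt : MulAut F3 :=
  MonoidHom.toMulEquiv ft ft'
    (FreeGroup.ext_hom _ _ (by rintro (_ | _ | _) <;>
      simp [ft, ft', FreeGroup.lift_apply_of]))
    (FreeGroup.ext_hom _ _ (by rintro (_ | _ | _) <;>
      simp [ft, ft', FreeGroup.lift_apply_of]))

lemma φs_apply (x : F3) : φs x = fs x := rfl
lemma φt_apply (x : F3) : φt x = ft x := rfl

def act : FB →* MulAut F3 :=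
  FreeGroup.lift (fun g => match g with
    | V2.S => φs
    | V2.T => φt)

lemma act_S : act (FreeGroup.of V2.S) = φs := FreeGroup.lift_apply_of
lemma act_T : act (FreeGroup.of V2.T) = φt := FreeGroup.lift_apply_of

lemma act_B (u : FB) : act u (FreeGroup.of V3.B) = FreeGroup.of V3.B := by
  induction u using FreeGroup.induction_on with
  | C1 => rw [map_one]; rfl
  | of g =>
    cases g
    · rw [act_S, φs_apply]
      simp [fs, FreeGroup.lift_apply_of]
    · rw [act_T, φt_apply]
      simp [ft, FreeGroup.lift_apply_of]
  | inv_of g ih =>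
    rw [map_inv]
    have : (act (FreeGroup.of g))⁻¹ (FreeGroup.of V3.B) = (act (FreeGroup.of g)).symm (FreeGroup.of V3.B) := rfl
    rw [this, MulEquiv.symm_apply_eq, ih]
  | mul y z ihy ihz =>
    rw [map_mul]
    have : (act y * act z) (FreeGroup.of V3.B) = act y (act z (FreeGroup.of V3.B)) := rfl
    rw [this, ihz, ihy]

lemma act_C (u : FB) : act u (FreeGroup.of V3.C) = FreeGroup.of V3.C := by
  induction u using FreeGroup.induction_on with
  | C1 => rw [map_one]; rfl
  | of g =>
    cases g
    · rw [act_S, φs_apply]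
      simp [fs, FreeGroup.lift_apply_of]
    · rw [act_T, φt_apply]
      simp [ft, FreeGroup.lift_apply_of]
  | inv_of g ih =>
    rw [map_inv]
    have : (act (FreeGroup.of g))⁻¹ (FreeGroup.of V3.C) = (act (FreeGroup.of g)).symm (FreeGroup.of V3.C) := rfl
    rw [this, MulEquiv.symm_apply_eq, ih]
  | mul y z ihy ihz =>
    rw [map_mul]
    have : (act y * act z) (FreeGroup.of V3.C) = act y (act z (FreeGroup.of V3.C)) := rfl
    rw [this, ihz, ihy]

lemma act_Bzpow (u : FB) (m : ℤ) :
    act u ((FreeGroup.of V3.B) ^ m) = (FreeGroup.of V3.B) ^ m := by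
  rw [map_zpow, act_B]

def texp : FB →* Multiplicative ℤ :=
  FreeGroup.lift (fun v => Multiplicative.ofAdd (match v with | .S => 0 | .T => 1))

def szi (u : FB) : ℤ := Multiplicative.toAdd (sexp u)
def tzi (u : FB) : ℤ := Multiplicative.toAdd (texp u)

lemma szi_mul (u v : FB) : szi (u * v) = szi u + szi v := by simp [szi]
lemma tzi_mul (u v : FB) : tzi (u * v) = tzi u + tzi v := by simp [tzi]
lemma szi_inv (u : FB) : szi u⁻¹ = -szi u := by simp [szi]
lemma tzi_inv (u : FB) : tzi u⁻¹ = -tzi u := by simp [tzi]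

lemma act_A (u : FB) :
    act u (FreeGroup.of V3.A)
      = (FreeGroup.of V3.B) ^ (tzi u) * FreeGroup.of V3.A * (FreeGroup.of V3.B) ^ (szi u) := by
  induction u using FreeGroup.induction_on with
  | C1 => simp [szi, tzi]
  | of g =>
    cases g
    · rw [act_S, φs_apply]
      have h1 : szi (FreeGroup.of V2.S) = 1 := by simp [szi, sexp, FreeGroup.lift_apply_of]
      have h2 : tzi (FreeGroup.of V2.S) = 0 := by simp [tzi, texp, FreeGroup.lift_apply_of]
      rw [h1, h2]
      simp [fs, FreeGroup.lift_apply_of]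
    · rw [act_T, φt_apply]
      have h1 : szi (FreeGroup.of V2.T) = 0 := by simp [szi, sexp, FreeGroup.lift_apply_of]
      have h2 : tzi (FreeGroup.of V2.T) = 1 := by simp [tzi, texp, FreeGroup.lift_apply_of]
      rw [h1, h2]
      simp [ft, FreeGroup.lift_apply_of]
  | inv_of g ih =>
    rw [map_inv]
    have h0 : (act (FreeGroup.of g))⁻¹ (FreeGroup.of V3.A) = (act (FreeGroup.of g)).symm (FreeGroup.of V3.A) :=
      rfl
    rw [h0, MulEquiv.symm_apply_eq, map_mul, map_mul, act_Bzpow, act_Bzpow, ih,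
      show (FreeGroup.of g)⁻¹ = (FreeGroup.of g : FB)⁻¹ from rfl, szi_inv, tzi_inv]
    group
  | mul y z ihy ihz =>
    rw [map_mul]
    have h0 : (act y * act z) (FreeGroup.of V3.A) = act y (act z (FreeGroup.of V3.A)) := rfl
    rw [h0, ihz, map_mul, map_mul, act_Bzpow, act_Bzpow, ihy, szi_mul, tzi_mul]
    rw [zpow_add, zpow_add]
    group

lemma szi_g₀ (k : ℤ) : szi (g₀ k) = 1 := by
  simp [szi, g₀, sexp, FreeGroup.lift_apply_of]

lemma tzi_g₀ (k : ℤ) : tzi (g₀ k) = k := by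
  simp [tzi, g₀, texp, FreeGroup.lift_apply_of]

lemma act_g₀_eq_φk (k : ℤ) (w : F3) : act (g₀ k) w = φk k w := by
  have : ((act (g₀ k)) : F3 →* F3) = φk k := by
    apply FreeGroup.ext_hom
    rintro (_ | _ | _)
    · show act (g₀ k) (FreeGroup.of V3.A) = φk k (FreeGroup.of V3.A)
      rw [act_A, szi_g₀, tzi_g₀, zpow_one]
      exact (FreeGroup.lift_apply_of (f := fun g => match g with
        | V3.A => (FreeGroup.of V3.B) ^ k * FreeGroup.of V3.A * FreeGroup.of V3.B
        | V3.B => FreeGroup.of V3.B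
        | V3.C => FreeGroup.of V3.C) (x := V3.A)).symm
    · show act (g₀ k) (FreeGroup.of V3.B) = φk k (FreeGroup.of V3.B)
      rw [act_B]
      exact (FreeGroup.lift_apply_of (f := fun g => match g with
        | V3.A => (FreeGroup.of V3.B) ^ k * FreeGroup.of V3.A * FreeGroup.of V3.B
        | V3.B => FreeGroup.of V3.B
        | V3.C => FreeGroup.of V3.C) (x := V3.B)).symm
    · show act (g₀ k) (FreeGroup.of V3.C) = φk k (FreeGroup.of V3.C)
      rw [act_C]
      exact (FreeGroup.lift_apply_of (f := fun g => match g with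
        | V3.A => (FreeGroup.of V3.B) ^ k * FreeGroup.of V3.A * FreeGroup.of V3.B
        | V3.B => FreeGroup.of V3.B
        | V3.C => FreeGroup.of V3.C) (x := V3.C)).symm
  exact DFunLike.congr_fun this w

end Action

section Glue

abbrev G' := PresentedGroup ffRels

abbrev K := SemidirectProduct F3 FB act

open SemidirectProduct

/-- shorthand for the generators of `G` -/
def og (x : Gen) : G' := PresentedGroup.of x

lemma relG {r : FreeGroup Gen} (hr : r ∈ ffRels) : PresentedGroup.mk ffRels r = 1 :=
  (QuotientGroup.eq_one_iff r).mpr (Subgroup.subset_normalClosure hr)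

lemma rel_sa : og Gen.s * og Gen.a * (og Gen.s)⁻¹ = og Gen.a * og Gen.b := by
  have h := relG (r := FreeGroup.of Gen.s * FreeGroup.of Gen.a * (FreeGroup.of Gen.s)⁻¹ *
    (FreeGroup.of Gen.a * FreeGroup.of Gen.b)⁻¹) (Set.mem_insert _ _)
  rw [map_mul, map_mul, map_inv, map_inv, map_mul, map_mul] at h
  exact mul_inv_eq_one.mp h

lemma rel_sb : og Gen.s * og Gen.b * (og Gen.s)⁻¹ = og Gen.b := by
  have h := relG (r := FreeGroup.of Gen.s * FreeGroup.of Gen.b * (FreeGroup.of Gen.s)⁻¹ *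
    (FreeGroup.of Gen.b)⁻¹) (Set.mem_insert_of_mem _ (Set.mem_insert _ _))
  rw [map_mul, map_mul, map_inv, map_inv, map_mul] at h
  exact mul_inv_eq_one.mp h

lemma rel_sc : og Gen.s * og Gen.c * (og Gen.s)⁻¹ = og Gen.c := by
  have h := relG (r := FreeGroup.of Gen.s * FreeGroup.of Gen.c * (FreeGroup.of Gen.s)⁻¹ *
    (FreeGroup.of Gen.c)⁻¹)
    (Set.mem_insert_of_mem _ (Set.mem_insert_of_mem _ (Set.mem_insert _ _)))
  rw [map_mul, map_mul, map_inv, map_inv, map_mul] at h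
  exact mul_inv_eq_one.mp h

lemma rel_ta : og Gen.t * og Gen.a * (og Gen.t)⁻¹ = og Gen.b * og Gen.a := by
  have h := relG (r := FreeGroup.of Gen.t * FreeGroup.of Gen.a * (FreeGroup.of Gen.t)⁻¹ *
    (FreeGroup.of Gen.b * FreeGroup.of Gen.a)⁻¹)
    (Set.mem_insert_of_mem _ (Set.mem_insert_of_mem _ (Set.mem_insert_of_mem _
      (Set.mem_insert _ _))))
  rw [map_mul, map_mul, map_inv, map_inv, map_mul, map_mul] at h
  exact mul_inv_eq_one.mp h

lemma rel_tb : og Gen.t * og Gen.b * (og Gen.t)⁻¹ = og Gen.b := by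
  have h := relG (r := FreeGroup.of Gen.t * FreeGroup.of Gen.b * (FreeGroup.of Gen.t)⁻¹ *
    (FreeGroup.of Gen.b)⁻¹)
    (Set.mem_insert_of_mem _ (Set.mem_insert_of_mem _ (Set.mem_insert_of_mem _
      (Set.mem_insert_of_mem _ (Set.mem_insert _ _)))))
  rw [map_mul, map_mul, map_inv, map_inv, map_mul] at h
  exact mul_inv_eq_one.mp h

lemma rel_tc : og Gen.t * og Gen.c * (og Gen.t)⁻¹ = og Gen.c := by
  have h := relG (r := FreeGroup.of Gen.t * FreeGroup.of Gen.c * (FreeGroup.of Gen.t)⁻¹ *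
    (FreeGroup.of Gen.c)⁻¹)
    (Set.mem_insert_of_mem _ (Set.mem_insert_of_mem _ (Set.mem_insert_of_mem _
      (Set.mem_insert_of_mem _ (Set.mem_insert_of_mem _ rfl)))))
  rw [map_mul, map_mul, map_inv, map_inv, map_mul] at h
  exact mul_inv_eq_one.mp h

def f₁ : F3 →* G' :=
  FreeGroup.lift (fun g => match g with
    | V3.A => og Gen.a
    | V3.B => og Gen.b
    | V3.C => og Gen.c)

def f₂ : FB →* G' :=
  FreeGroup.lift (fun g => match g with
    | V2.S => og Gen.s
    | V2.T => og Gen.t)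

lemma f₁A : f₁ (FreeGroup.of V3.A) = og Gen.a := FreeGroup.lift_apply_of
lemma f₁B : f₁ (FreeGroup.of V3.B) = og Gen.b := FreeGroup.lift_apply_of
lemma f₁C : f₁ (FreeGroup.of V3.C) = og Gen.c := FreeGroup.lift_apply_of
lemma f₂S : f₂ (FreeGroup.of V2.S) = og Gen.s := FreeGroup.lift_apply_of
lemma f₂T : f₂ (FreeGroup.of V2.T) = og Gen.t := FreeGroup.lift_apply_of

lemma compatS (n : F3) : f₁ (φs n) = og Gen.s * f₁ n * (og Gen.s)⁻¹ := by
  induction n using FreeGroup.induction_on with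
  | C1 => rw [map_one, map_one]; simp
  | of g =>
    cases g
    · rw [φs_apply]
      rw [show fs (FreeGroup.of V3.A) = FreeGroup.of V3.A * FreeGroup.of V3.B from
        FreeGroup.lift_apply_of]
      rw [map_mul, f₁A, f₁B]
      exact rel_sa.symm
    · rw [φs_apply]
      rw [show fs (FreeGroup.of V3.B) = FreeGroup.of V3.B from FreeGroup.lift_apply_of]
      rw [f₁B]
      exact rel_sb.symm
    · rw [φs_apply]
      rw [show fs (FreeGroup.of V3.C) = FreeGroup.of V3.C from FreeGroup.lift_apply_of]
      rw [f₁C]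
      exact rel_sc.symm
  | inv_of g ih =>
    rw [map_inv, map_inv, map_inv, ih]
    group
  | mul y z ihy ihz =>
    rw [map_mul, map_mul, map_mul, ihy, ihz]
    group

lemma compatT (n : F3) : f₁ (φt n) = og Gen.t * f₁ n * (og Gen.t)⁻¹ := by
  induction n using FreeGroup.induction_on with
  | C1 => rw [map_one, map_one]; simp
  | of g =>
    cases g
    · rw [φt_apply]
      rw [show ft (FreeGroup.of V3.A) = FreeGroup.of V3.B * FreeGroup.of V3.A from
        FreeGroup.lift_apply_of]
      rw [map_mul, f₁A, f₁B]
      exact rel_ta.symm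
    · rw [φt_apply]
      rw [show ft (FreeGroup.of V3.B) = FreeGroup.of V3.B from FreeGroup.lift_apply_of]
      rw [f₁B]
      exact rel_tb.symm
    · rw [φt_apply]
      rw [show ft (FreeGroup.of V3.C) = FreeGroup.of V3.C from FreeGroup.lift_apply_of]
      rw [f₁C]
      exact rel_tc.symm
  | inv_of g ih =>
    rw [map_inv, map_inv, map_inv, ih]
    group
  | mul y z ihy ihz =>
    rw [map_mul, map_mul, map_mul, ihy, ihz]
    group

lemma compat (g : FB) (n : F3) : f₁ (act g n) = f₂ g * f₁ n * (f₂ g)⁻¹ := by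
  induction g using FreeGroup.induction_on generalizing n with
  | C1 => rw [map_one, map_one]; simp
  | of g =>
    cases g
    · rw [act_S, f₂S]
      exact compatS n
    · rw [act_T, f₂T]
      exact compatT n
  | inv_of g ih =>
    have hbase := ih ((act (FreeGroup.of g))⁻¹ n)
    have hn : act (FreeGroup.of g) ((act (FreeGroup.of g))⁻¹ n) = n := by
      rw [show ((act (FreeGroup.of g))⁻¹ : MulAut F3) n = (act (FreeGroup.of g)).symm n from rfl]
      exact (act (FreeGroup.of g)).apply_symm_apply n
    rw [hn] at hbase
    rw [map_inv, map_inv, hbase]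
    group
  | mul y z ih1 ih2 =>
    rw [map_mul, map_mul]
    rw [show (act y * act z) n = act y (act z n) from rfl, ih1, ih2]
    group

def ψcompat : ∀ g : FB, f₁.comp (act g).toMonoidHom
    = (MulAut.conj (f₂ g)).toMonoidHom.comp f₁ :=
  fun g => MonoidHom.ext (fun n => by simpa using compat g n)

def ψ : K →* G' := SemidirectProduct.lift f₁ f₂ ψcompat

lemma ψ_inl (n : F3) : ψ (inl n) = f₁ n := SemidirectProduct.lift_inl f₁ f₂ ψcompat n
lemma ψ_inr (g : FB) : ψ (inr g) = f₂ g := SemidirectProduct.lift_inr f₁ f₂ ψcompat g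

def fgen : Gen → K := fun x =>
  match x with
  | Gen.a => inl (FreeGroup.of V3.A)
  | Gen.b => inl (FreeGroup.of V3.B)
  | Gen.c => inl (FreeGroup.of V3.C)
  | Gen.s => inr (FreeGroup.of V2.S)
  | Gen.t => inr (FreeGroup.of V2.T)

lemma conj_inl (g : FB) (n : F3) :
    inr (φ := act) g * inl n * (inr g)⁻¹ = inl (act g n) := by
  rw [← map_inv]
  exact (inl_aut g n).symm

lemma hrels : ∀ r ∈ ffRels, FreeGroup.lift fgen r = 1 := by
  intro r hr
  simp only [ffRels, Set.mem_insert_iff, Set.mem_singleton_iff] at hr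
  rcases hr with rfl | rfl | rfl | rfl | rfl | rfl
  · simp only [map_mul, map_inv, FreeGroup.lift_apply_of, fgen]
    rw [conj_inl]
    rw [show act (FreeGroup.of V2.S) (FreeGroup.of V3.A)
      = FreeGroup.of V3.A * FreeGroup.of V3.B by rw [act_S, φs_apply]; exact FreeGroup.lift_apply_of]
    rw [← map_mul]
    exact mul_inv_cancel _
  · simp only [map_mul, map_inv, FreeGroup.lift_apply_of, fgen]
    rw [conj_inl]
    rw [show act (FreeGroup.of V2.S) (FreeGroup.of V3.B)
      = FreeGroup.of V3.B from act_B _]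
    simp
  · simp only [map_mul, map_inv, FreeGroup.lift_apply_of, fgen]
    rw [conj_inl]
    rw [show act (FreeGroup.of V2.S) (FreeGroup.of V3.C)
      = FreeGroup.of V3.C from act_C _]
    simp
  · simp only [map_mul, map_inv, FreeGroup.lift_apply_of, fgen]
    rw [conj_inl]
    rw [show act (FreeGroup.of V2.T) (FreeGroup.of V3.A)
      = FreeGroup.of V3.B * FreeGroup.of V3.A by rw [act_T, φt_apply]; exact FreeGroup.lift_apply_of]
    rw [← map_mul]
    exact mul_inv_cancel _
  · simp only [map_mul, map_inv, FreeGroup.lift_apply_of, fgen]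
    rw [conj_inl]
    rw [show act (FreeGroup.of V2.T) (FreeGroup.of V3.B)
      = FreeGroup.of V3.B from act_B _]
    simp
  · simp only [map_mul, map_inv, FreeGroup.lift_apply_of, fgen]
    rw [conj_inl]
    rw [show act (FreeGroup.of V2.T) (FreeGroup.of V3.C)
      = FreeGroup.of V3.C from act_C _]
    simp

def θ : G' →* K := PresentedGroup.toGroup hrels

lemma θ_of (x : Gen) : θ (og x) = fgen x := PresentedGroup.toGroup.of hrels

lemma hcomp1 : ψ.comp θ = MonoidHom.id G' := by
  apply PresentedGroup.ext
  intro x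
  show ψ (θ (og x)) = og x
  rw [θ_of]
  cases x
  · show ψ (inl (FreeGroup.of V3.A)) = _
    rw [ψ_inl, f₁A]
  · show ψ (inl (FreeGroup.of V3.B)) = _
    rw [ψ_inl, f₁B]
  · show ψ (inl (FreeGroup.of V3.C)) = _
    rw [ψ_inl, f₁C]
  · show ψ (inr (FreeGroup.of V2.S)) = _
    rw [ψ_inr, f₂S]
  · show ψ (inr (FreeGroup.of V2.T)) = _
    rw [ψ_inr, f₂T]

lemma hcomp2 : θ.comp ψ = MonoidHom.id K := by
  apply SemidirectProduct.hom_ext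
  · apply FreeGroup.ext_hom
    intro g
    show θ (ψ (inl (FreeGroup.of g))) = inl (FreeGroup.of g)
    rw [ψ_inl]
    cases g
    · rw [f₁A]; exact θ_of Gen.a
    · rw [f₁B]; exact θ_of Gen.b
    · rw [f₁C]; exact θ_of Gen.c
  · apply FreeGroup.ext_hom
    intro g
    show θ (ψ (inr (FreeGroup.of g))) = inr (FreeGroup.of g)
    rw [ψ_inr]
    cases g
    · rw [f₂S]; exact θ_of Gen.s
    · rw [f₂T]; exact θ_of Gen.t

def eGK : G' ≃* K := MonoidHom.toMulEquiv θ ψ hcomp1 hcomp2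

lemma eGK_apply (x : G') : eGK x = θ x := rfl


/-- the centraliser computation on the `K` side -/
lemma Kcent (k : ℤ) (hk : k ≠ 0) :
    Subgroup.centralizer ({inr (g₀ k)} : Set K)
      = Subgroup.closure
          ({inl (FreeGroup.of V3.B), inl (FreeGroup.of V3.C), inr (g₀ k)} : Set K) := by
  apply le_antisymm
  · intro x hx
    have hcomm : inr (g₀ k) * x = x * inr (g₀ k) :=
      Subgroup.mem_centralizer_iff.mp hx _ (Set.mem_singleton _)
    have hleft : act (g₀ k) x.left = x.left := by
      have h := congrArg SemidirectProduct.left hcomm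
      simpa [mul_left] using h
    have hright : g₀ k * x.right = x.right * g₀ k := by
      have h := congrArg SemidirectProduct.right hcomm
      simpa [mul_right] using h
    have hl : x.left ∈ Subgroup.closure ({FreeGroup.of V3.B, FreeGroup.of V3.C} : Set F3) := by
      apply lemB k hk
      rw [← act_g₀_eq_φk]
      exact hleft
    have hr : x.right ∈ Subgroup.zpowers (g₀ k) := lemA k x.right hright.symm
    rw [← inl_left_mul_inr_right x]
    apply mul_mem
    · -- inl x.left
      refine Subgroup.closure_induction (p := fun n _ => (inl n : K) ∈ Subgroup.closure
          ({inl (FreeGroup.of V3.B), inl (FreeGroup.of V3.C), inr (g₀ k)} : Set K))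
        ?_ ?_ ?_ ?_ hl
      · rintro y (rfl | rfl)
        · exact Subgroup.subset_closure (by simp)
        · exact Subgroup.subset_closure (by simp)
      · show (inl (1 : F3) : K) ∈ _
        rw [map_one]; exact one_mem _
      · intro a b _ _ ha hb
        show (inl (a * b) : K) ∈ _
        rw [map_mul]; exact mul_mem ha hb
      · intro a _ ha
        show (inl a⁻¹ : K) ∈ _
        rw [map_inv]; exact inv_mem ha
    · obtain ⟨m, hm⟩ := Subgroup.mem_zpowers_iff.mp hr
      rw [← hm, map_zpow]
      exact zpow_mem (Subgroup.subset_closure (by simp)) m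
  · rw [Subgroup.closure_le]
    rintro y (rfl | rfl | rfl)
    · rw [SetLike.mem_coe, Subgroup.mem_centralizer_iff]
      rintro h (rfl : h = inr (g₀ k))
      calc inr (g₀ k) * inl (FreeGroup.of V3.B)
          = inr (g₀ k) * inl (FreeGroup.of V3.B) * (inr (g₀ k))⁻¹ * inr (g₀ k) := by group
        _ = inl (act (g₀ k) (FreeGroup.of V3.B)) * inr (g₀ k) := by rw [conj_inl]
        _ = inl (FreeGroup.of V3.B) * inr (g₀ k) := by rw [act_B]
    · rw [SetLike.mem_coe, Subgroup.mem_centralizer_iff]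
      rintro h (rfl : h = inr (g₀ k))
      calc inr (g₀ k) * inl (FreeGroup.of V3.C)
          = inr (g₀ k) * inl (FreeGroup.of V3.C) * (inr (g₀ k))⁻¹ * inr (g₀ k) := by group
        _ = inl (act (g₀ k) (FreeGroup.of V3.C)) * inr (g₀ k) := by rw [conj_inl]
        _ = inl (FreeGroup.of V3.C) * inr (g₀ k) := by rw [act_C]
    · rw [SetLike.mem_coe, Subgroup.mem_centralizer_iff]
      rintro h (rfl : h = inr (g₀ k))
      rfl

lemma θ_of' (x : Gen) : θ (PresentedGroup.of x) = fgen x := θ_of x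

end Glue

end FFcent

open FFcent SemidirectProduct in
/-- In `G`, for every nonzero integer `k`: `C_G(stᵏ) = ⟨b, c, stᵏ⟩`. -/
theorem centralizer_stk_ff (k : ℤ) (hk : k ≠ 0) :
    Subgroup.centralizer
        {(PresentedGroup.of Gen.s * (PresentedGroup.of Gen.t : PresentedGroup ffRels) ^ k :
          PresentedGroup ffRels)} =
      Subgroup.closure
        {PresentedGroup.of Gen.b, PresentedGroup.of Gen.c,
          PresentedGroup.of Gen.s *
            (PresentedGroup.of Gen.t : PresentedGroup ffRels) ^ k} := by
  classical
  set gG : G' := PresentedGroup.of Gen.s * (PresentedGroup.of Gen.t : PresentedGroup ffRels) ^ k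
    with hgG
  have hegG : eGK gG = inr (g₀ k) := by
    rw [eGK_apply, hgG, map_mul, map_zpow, θ_of', θ_of']
    show inr (FreeGroup.of V2.S) * (inr (FreeGroup.of V2.T)) ^ k = _
    rw [← map_zpow, ← map_mul]
    rfl
  have himg : Subgroup.map eGK.toMonoidHom
      (Subgroup.closure {PresentedGroup.of Gen.b, PresentedGroup.of Gen.c, gG})
      = Subgroup.closure
        ({inl (FreeGroup.of V3.B), inl (FreeGroup.of V3.C), inr (g₀ k)} : Set K) := by
    rw [MonoidHom.map_closure]
    congr 1
    rw [Set.image_insert_eq, Set.image_insert_eq, Set.image_singleton]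
    have h1 : eGK.toMonoidHom (PresentedGroup.of Gen.b) = inl (FreeGroup.of V3.B) :=
      θ_of' Gen.b
    have h2 : eGK.toMonoidHom (PresentedGroup.of Gen.c) = inl (FreeGroup.of V3.C) :=
      θ_of' Gen.c
    have h3 : eGK.toMonoidHom gG = inr (g₀ k) := hegG
    rw [h1, h2, h3]
  ext x
  constructor
  · intro hx
    have hc : gG * x = x * gG :=
      Subgroup.mem_centralizer_iff.mp hx gG (Set.mem_singleton _)
    have hcK : eGK x ∈ Subgroup.centralizer ({inr (g₀ k)} : Set K) := by
      rw [Subgroup.mem_centralizer_iff]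
      rintro h (rfl : h = inr (g₀ k))
      rw [← hegG, ← map_mul, hc, map_mul]
    rw [Kcent k hk, ← himg] at hcK
    obtain ⟨y, hy, hxy⟩ := Subgroup.mem_map.mp hcK
    have hyx : y = x := eGK.injective hxy
    rwa [← hyx]
  · intro hx
    have hK : eGK x ∈ Subgroup.closure
        ({inl (FreeGroup.of V3.B), inl (FreeGroup.of V3.C), inr (g₀ k)} : Set K) := by
      rw [← himg]
      exact Subgroup.mem_map_of_mem _ hx
    rw [← Kcent k hk] at hK
    have hcomm := Subgroup.mem_centralizer_iff.mp hK (inr (g₀ k)) (Set.mem_singleton _)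
    rw [Subgroup.mem_centralizer_iff]
    rintro h (rfl : h = gG)
    apply eGK.injective
    calc eGK (gG * x) = eGK gG * eGK x := map_mul _ _ _
      _ = inr (g₀ k) * eGK x := by rw [hegG]
      _ = eGK x * inr (g₀ k) := hcomm
      _ = eGK x * eGK gG := by rw [hegG]
      _ = eGK (x * gG) := (map_mul _ _ _).symm
end
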